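/- There is an absolute constant c such that for every K^# formula φ there exists a GNN (with sum aggregation, combination functions of the form COMB(x,y)=σ(xC+yA+b) with integer matrices C, A and integer vector b, and classification reading one component of the final state) whose number of layers is at most c·(md(φ)+1) and which recognizes exactly the class of pointed graphs satisfying φ. -/

import Mathlib

open scoped Classical

/-- A finite labeled directed graph: edges and a valuation of atomic
propositions (indexed by `ℕ`) at each vertex. -/
structure LGraph (V : Type) [Fintype V] where
  edge : V → V → Bool
  label : V → ℕ → Bool

mutual
/-- Formulas of the logic `K^#`. -/
inductive KForm : Type where
  | atom : ℕ → KForm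
  | not : KForm → KForm
  | or : KForm → KForm → KForm
  | ge0 : KExpr → KForm
/-- Expressions of the logic `K^#`. -/
inductive KExpr : Type where
  | const : ℤ → KExpr
  | ind : KForm → KExpr
  | count : KForm → KExpr
  | add : KExpr → KExpr → KExpr
  | scale : ℤ → KExpr → KExpr
end

mutual
/-- Truth of a `K^#` formula at a pointed graph. -/
def KForm.sat {V : Type} [Fintype V] (G : LGraph V) (u : V) : KForm → Bool
  | .atom p => G.label u p
  | .not φ => !(KForm.sat G u φ)
  | .or φ ψ => KForm.sat G u φ || KForm.sat G u ψ
  | .ge0 E => decide (0 ≤ KExpr.val G u E)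
/-- Value of a `K^#` expression at a pointed graph. -/
def KExpr.val {V : Type} [Fintype V] (G : LGraph V) (u : V) : KExpr → ℤ
  | .const c => c
  | .ind φ => if KForm.sat G u φ then 1 else 0
  | .count φ =>
      ((Finset.univ.filter (fun v => G.edge u v = true ∧ KForm.sat G v φ = true)).card : ℤ)
  | .add E₁ E₂ => KExpr.val G u E₁ + KExpr.val G u E₂
  | .scale c E => c * KExpr.val G u E
end

/-- The clipped (truncated) ReLU `σ(x) = min(max(0,x),1)`. -/
def clip (x : ℝ) : ℝ := min (max 0 x) 1

/-- A sum-aggregation GNN: dimension `d`, number `k ≤ d` of input propositions,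
`L` layers, each layer `t` given by integer matrices `C t`, `A t` and an integer
bias vector `b t` (the combination function being `σ(xC + yA + b)` where `y` is
the sum of the states of the successors), and a classification function `cls`. -/
structure GNN where
  d : ℕ
  k : ℕ
  hk : k ≤ d
  L : ℕ
  C : ℕ → Matrix (Fin d) (Fin d) ℤ
  A : ℕ → Matrix (Fin d) (Fin d) ℤ
  b : ℕ → Fin d → ℤ
  cls : (Fin d → ℝ) → Bool

/-- The state of the GNN after `t` layers: the initial state lists the truth values
of the atomic propositions `p_0, …, p_{k-1}` padded with zeros, and
`x_{t+1}(u) = σ(x_t(u)·C + (Σ_{(u,v)∈E} x_t(v))·A + b)`. -/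
noncomputable def GNN.state (N : GNN) {V : Type} [Fintype V] (G : LGraph V) :
    ℕ → V → Fin N.d → ℝ
  | 0 => fun u i => if i.val < N.k ∧ G.label u i.val = true then 1 else 0
  | t + 1 => fun u i =>
      clip ((∑ j, N.state G t u j * (N.C t j i : ℝ))
        + (∑ j, (∑ v ∈ Finset.univ.filter (fun v => G.edge u v = true), N.state G t v j)
            * (N.A t j i : ℝ))
        + (N.b t i : ℝ))

/-- The GNN accepts a pointed graph iff the classification function returns 1 (true)
on the final state. -/
def GNN.accepts (N : GNN) {V : Type} [Fintype V] (G : LGraph V) (u : V) : Prop :=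
  N.cls (N.state G N.L u) = true

mutual
/-- Modal depth of a `K^#` formula. -/
def KForm.md : KForm → ℕ
  | .atom _ => 0
  | .not φ => φ.md
  | .or φ ψ => max φ.md ψ.md
  | .ge0 E => E.md
/-- Modal depth of a `K^#` expression. -/
def KExpr.md : KExpr → ℕ
  | .const _ => 0
  | .ind φ => φ.md
  | .count φ => φ.md + 1
  | .add E₁ E₂ => max E₁.md E₂.md
  | .scale _ E => E.md
end

/-! ### Auxiliary machinery -/

section ClipLemmas

lemma clip_nonneg (x : ℝ) : 0 ≤ clip x := le_min (le_max_left 0 x) zero_le_one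

lemma clip_le_one (x : ℝ) : clip x ≤ 1 := min_le_right _ _

lemma clip_of_mem {x : ℝ} (h0 : 0 ≤ x) (h1 : x ≤ 1) : clip x = x := by
  unfold clip
  rw [max_eq_right h0, min_eq_left h1]

lemma clip_of_nonpos {x : ℝ} (h : x ≤ 0) : clip x = 0 := by
  unfold clip
  rw [max_eq_left h, min_eq_left zero_le_one]

lemma clip_of_one_le {x : ℝ} (h : 1 ≤ x) : clip x = 1 := by
  unfold clip
  rw [min_eq_right]
  exact le_max_of_le_right h

/-- The key integer fact: `clip (z+1) = [0 ≤ z]` for an integer `z`. -/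
lemma clip_int_succ (z : ℤ) : clip ((z : ℝ) + 1) = if 0 ≤ z then 1 else 0 := by
  by_cases h : 0 ≤ z
  · rw [if_pos h]
    apply clip_of_one_le
    have : (0 : ℝ) ≤ (z : ℝ) := by exact_mod_cast h
    linarith
  · rw [if_neg h]
    apply clip_of_nonpos
    have : z ≤ -1 := by omega
    have : (z : ℝ) ≤ -1 := by exact_mod_cast this
    linarith

end ClipLemmas

section StateLemmas

variable {V : Type} [Fintype V]

lemma GNN.state_nonneg (N : GNN) (G : LGraph V) (t : ℕ) (u : V) (i : Fin N.d) :
    0 ≤ N.state G t u i := by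
  cases t with
  | zero => simp only [GNN.state]; positivity
  | succ t => exact clip_nonneg _

lemma GNN.state_le_one (N : GNN) (G : LGraph V) (t : ℕ) (u : V) (i : Fin N.d) :
    N.state G t u i ≤ 1 := by
  cases t with
  | zero =>
      simp only [GNN.state]
      split <;> norm_num
  | succ t => exact clip_le_one _

/-- `GNN.state` does not depend on the classification function. -/
lemma GNN.state_cls_congr (N : GNN) (cls' : (Fin N.d → ℝ) → Bool) (G : LGraph V)
    (t : ℕ) :
    GNN.state { N with cls := cls' } G t = N.state G t := by
  induction t with
  | zero => rfl
  | succ t ih => funext u i; simp only [GNN.state, ih]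

end StateLemmas

/-- Indicator of a formula, as a real number. -/
noncomputable def KForm.ind {V : Type} [Fintype V] (G : LGraph V) (u : V) (φ : KForm) : ℝ :=
  if φ.sat G u then 1 else 0

/-- Multi-realizer: a GNN with `t` layers whose state at layer `t` contains, at
designated coordinates, the indicator values of a family of formulas, at every vertex. -/
def MR (t : ℕ) {ι : Type} [Fintype ι] (fam : ι → KForm) : Prop :=
  ∃ N : GNN, N.L = t ∧ ∃ e : ι → Fin N.d,
    ∀ (V : Type) [Fintype V] (G : LGraph V) (v : V) (j : ι),
      N.state G t v (e j) = (fam j).ind G v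

lemma MR.precomp {t : ℕ} {ι ι' : Type} [Fintype ι] [Fintype ι'] {fam : ι → KForm}
    (h : MR t fam) (r : ι' → ι) : MR t (fam ∘ r) := by
  obtain ⟨N, hL, e, he⟩ := h
  exact ⟨N, hL, e ∘ r, fun V _ G v j => he V G v (r j)⟩

lemma MR.congr {t : ℕ} {ι : Type} [Fintype ι] {fam fam' : ι → KForm}
    (h : MR t fam)
    (hsem : ∀ (V : Type) [Fintype V] (G : LGraph V) (v : V) (j : ι),
      (fam' j).sat G v = (fam j).sat G v) : MR t fam' := by
  obtain ⟨N, hL, e, he⟩ := h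
  refine ⟨N, hL, e, fun V _ G v j => ?_⟩
  rw [he V G v j]
  unfold KForm.ind
  rw [hsem V G v j]
section Ext

/-- Fiber-sum rearrangement. -/
lemma fiber_sum {ι : Type} [Fintype ι] {d : ℕ} (e : ι → Fin d) (x : Fin d → ℝ) (c : ι → ℤ) :
    (∑ j0 : Fin d, x j0 * ((∑ j' ∈ Finset.univ.filter (fun j' => e j' = j0), c j' : ℤ) : ℝ))
      = ∑ j' : ι, x (e j') * (c j' : ℝ) := by
  have : ∀ j0 : Fin d, x j0 * ((∑ j' ∈ Finset.univ.filter (fun j' => e j' = j0), c j' : ℤ) : ℝ)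
      = ∑ j' ∈ Finset.univ.filter (fun j' => e j' = j0), x (e j') * (c j' : ℝ) := by
    intro j0
    rw [Int.cast_sum, Finset.mul_sum]
    apply Finset.sum_congr rfl
    intro j' hj'
    rw [Finset.mem_filter] at hj'
    rw [hj'.2]
  rw [Finset.sum_congr rfl (fun j0 _ => this j0)]
  exact Finset.sum_fiberwise _ _ _

variable {ι ω : Type} [Fintype ι] [Fintype ω]

/-- The GNN extending `N` by one layer with `Fintype.card ω` new coordinates. -/
noncomputable def extGNN (N : GNN) (e : ι → Fin N.d) (t : ℕ)
    (cC cA : ω → ι → ℤ) (bias : ω → ℤ) : GNN where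
  d := N.d + Fintype.card ω
  k := N.k
  hk := le_trans N.hk (Nat.le_add_right _ _)
  L := t + 1
  C := fun s =>
    if s < t then
      fun j i => Fin.addCases (motive := fun _ => ℤ)
        (fun j0 => Fin.addCases (motive := fun _ => ℤ) (fun i0 => N.C s j0 i0) (fun _ => 0) i)
        (fun _ => 0) j
    else
      fun j i => Fin.addCases (motive := fun _ => ℤ)
        (fun j0 => Fin.addCases (motive := fun _ => ℤ)
          (fun i0 => if j0 = i0 then 1 else 0)
          (fun oi => ∑ j' ∈ Finset.univ.filter (fun j' => e j' = j0),
            cC ((Fintype.equivFin ω).symm oi) j') i)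
        (fun _ => 0) j
  A := fun s =>
    if s < t then
      fun j i => Fin.addCases (motive := fun _ => ℤ)
        (fun j0 => Fin.addCases (motive := fun _ => ℤ) (fun i0 => N.A s j0 i0) (fun _ => 0) i)
        (fun _ => 0) j
    else
      fun j i => Fin.addCases (motive := fun _ => ℤ)
        (fun j0 => Fin.addCases (motive := fun _ => ℤ)
          (fun _ => 0)
          (fun oi => ∑ j' ∈ Finset.univ.filter (fun j' => e j' = j0),
            cA ((Fintype.equivFin ω).symm oi) j') i)
        (fun _ => 0) j
  b := fun s =>
    if s < t then Fin.addCases (motive := fun _ => ℤ) (N.b s) (fun _ => 0)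
    else Fin.addCases (motive := fun _ => ℤ) (fun _ => 0)
      (fun oi => bias ((Fintype.equivFin ω).symm oi))
  cls := fun _ => false

variable (N : GNN) (e : ι → Fin N.d) (t : ℕ) (cC cA : ω → ι → ℤ) (bias : ω → ℤ)

@[simp] lemma extGNN_d : (extGNN N e t cC cA bias).d = N.d + Fintype.card ω := rfl
@[simp] lemma extGNN_k : (extGNN N e t cC cA bias).k = N.k := rfl
@[simp] lemma extGNN_L : (extGNN N e t cC cA bias).L = t + 1 := rfl

variable {V : Type} [Fintype V]

lemma extGNN_sum (f : Fin ((extGNN N e t cC cA bias).d) → ℝ) :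
    ∑ j, f j = (∑ j0 : Fin N.d, f (Fin.castAdd (Fintype.card ω) j0))
      + ∑ j1 : Fin (Fintype.card ω), f (Fin.natAdd N.d j1) := Fin.sum_univ_add f


section EntryLemmas
variable {s : ℕ}
lemma extGNN_C_lt_ll (hs : s < t) (j0 i0 : Fin N.d) :
    (extGNN N e t cC cA bias).C s (Fin.castAdd (Fintype.card ω) j0)
      (Fin.castAdd (Fintype.card ω) i0) = N.C s j0 i0 := by
  simp [extGNN, hs]
lemma extGNN_C_lt_r (hs : s < t) (j1 : Fin (Fintype.card ω)) (i : Fin (N.d + Fintype.card ω)) :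
    (extGNN N e t cC cA bias).C s (Fin.natAdd N.d j1) i = 0 := by
  simp [extGNN, hs]
lemma extGNN_A_lt_ll (hs : s < t) (j0 i0 : Fin N.d) :
    (extGNN N e t cC cA bias).A s (Fin.castAdd (Fintype.card ω) j0)
      (Fin.castAdd (Fintype.card ω) i0) = N.A s j0 i0 := by
  simp [extGNN, hs]
lemma extGNN_A_lt_r (hs : s < t) (j1 : Fin (Fintype.card ω)) (i : Fin (N.d + Fintype.card ω)) :
    (extGNN N e t cC cA bias).A s (Fin.natAdd N.d j1) i = 0 := by
  simp [extGNN, hs]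
lemma extGNN_b_lt_l (hs : s < t) (i0 : Fin N.d) :
    (extGNN N e t cC cA bias).b s (Fin.castAdd (Fintype.card ω) i0) = N.b s i0 := by
  simp [extGNN, hs]
lemma extGNN_C_eq_ll (j0 i0 : Fin N.d) :
    (extGNN N e t cC cA bias).C t (Fin.castAdd (Fintype.card ω) j0)
      (Fin.castAdd (Fintype.card ω) i0) = if j0 = i0 then 1 else 0 := by
  simp [extGNN]
lemma extGNN_C_eq_lr (j0 : Fin N.d) (oi : Fin (Fintype.card ω)) :
    (extGNN N e t cC cA bias).C t (Fin.castAdd (Fintype.card ω) j0) (Fin.natAdd N.d oi)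
      = ∑ j' ∈ Finset.univ.filter (fun j' => e j' = j0),
          cC ((Fintype.equivFin ω).symm oi) j' := by
  simp [extGNN]
lemma extGNN_C_eq_r (j1 : Fin (Fintype.card ω)) (i : Fin (N.d + Fintype.card ω)) :
    (extGNN N e t cC cA bias).C t (Fin.natAdd N.d j1) i = 0 := by
  simp [extGNN]
lemma extGNN_A_eq_ll (j0 i0 : Fin N.d) :
    (extGNN N e t cC cA bias).A t (Fin.castAdd (Fintype.card ω) j0)
      (Fin.castAdd (Fintype.card ω) i0) = 0 := by
  simp [extGNN]
lemma extGNN_A_eq_lr (j0 : Fin N.d) (oi : Fin (Fintype.card ω)) :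
    (extGNN N e t cC cA bias).A t (Fin.castAdd (Fintype.card ω) j0) (Fin.natAdd N.d oi)
      = ∑ j' ∈ Finset.univ.filter (fun j' => e j' = j0),
          cA ((Fintype.equivFin ω).symm oi) j' := by
  simp [extGNN]
lemma extGNN_A_eq_r (j1 : Fin (Fintype.card ω)) (i : Fin (N.d + Fintype.card ω)) :
    (extGNN N e t cC cA bias).A t (Fin.natAdd N.d j1) i = 0 := by
  simp [extGNN]
lemma extGNN_b_eq_l (i0 : Fin N.d) :
    (extGNN N e t cC cA bias).b t (Fin.castAdd (Fintype.card ω) i0) = 0 := by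
  simp [extGNN]
lemma extGNN_b_eq_r (oi : Fin (Fintype.card ω)) :
    (extGNN N e t cC cA bias).b t (Fin.natAdd N.d oi)
      = bias ((Fintype.equivFin ω).symm oi) := by
  simp [extGNN]
end EntryLemmas

/-- Preservation of old coordinates. -/
lemma extGNN_pres (G : LGraph V) : ∀ s, s ≤ t → ∀ (u : V) (i : Fin N.d),
    (extGNN N e t cC cA bias).state G s u (Fin.castAdd (Fintype.card ω) i)
      = N.state G s u i := by
  intro s
  induction s with
  | zero =>
      intro _ u i
      simp only [GNN.state, extGNN_k, Fin.coe_castAdd]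
      exact if_congr Iff.rfl rfl rfl
  | succ s ih =>
      intro hs u i
      have hst : s < t := hs
      have hle : s ≤ t := le_of_lt hst
      simp only [GNN.state]
      congr 1
      rw [extGNN_sum N e t cC cA bias, extGNN_sum N e t cC cA bias]
      simp only [extGNN_C_lt_ll N e t cC cA bias hst, extGNN_C_lt_r N e t cC cA bias hst,
        extGNN_A_lt_ll N e t cC cA bias hst, extGNN_A_lt_r N e t cC cA bias hst,
        extGNN_b_lt_l N e t cC cA bias hst,
        Int.cast_zero, mul_zero, Finset.sum_const_zero, add_zero]
      congr 1
      congr 1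
      · exact Finset.sum_congr rfl (fun j0 _ => by rw [ih hle u j0])
      · apply Finset.sum_congr rfl
        intro j0 _
        congr 1
        exact Finset.sum_congr rfl (fun w _ => by rw [ih hle w j0])

/-- Extension lemma: given a multi-realizer for `g`, and new target formulas `h` whose
indicators are expressed as a clipped integer-linear combination of the indicators of the
`g`'s (both at the vertex and aggregated over successors), we get a multi-realizer for the
combined family with one more layer. -/
lemma MR.ext {t : ℕ} {g : ι → KForm}
    (hMR : MR t g) (h : ω → KForm) (cC cA : ω → ι → ℤ) (bias : ω → ℤ)
    (hsem : ∀ (V : Type) [Fintype V] (G : LGraph V) (u : V) (o : ω),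
      (h o).ind G u =
        clip ((∑ j', (g j').ind G u * (cC o j' : ℝ))
          + (∑ j', (∑ v ∈ Finset.univ.filter (fun v => G.edge u v = true), (g j').ind G v)
              * (cA o j' : ℝ))
          + (bias o : ℝ))) :
    MR (t + 1) (Sum.elim g h) := by
  classical
  obtain ⟨N, hL, e, he⟩ := hMR
  refine ⟨extGNN N e t cC cA bias, rfl,
    Sum.elim (fun j' => Fin.castAdd (Fintype.card ω) (e j'))
      (fun o => Fin.natAdd N.d (Fintype.equivFin ω o)), ?_⟩
  intro V _ G v j
  have hnotlt : ¬ (t < t) := lt_irrefl t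
  have pres := extGNN_pres N e t cC cA bias (G := G)
  cases j with
  | inl j' =>
      show GNN.state (extGNN N e t cC cA bias) G (t+1) v (Fin.castAdd (Fintype.card ω) (e j')) = _
      simp only [GNN.state, Sum.elim_inl]
      rw [extGNN_sum N e t cC cA bias, extGNN_sum N e t cC cA bias]
      simp only [extGNN_C_eq_ll N e t cC cA bias, extGNN_C_eq_r N e t cC cA bias,
        extGNN_A_eq_ll N e t cC cA bias, extGNN_A_eq_r N e t cC cA bias,
        extGNN_b_eq_l N e t cC cA bias,
        Int.cast_zero, mul_zero, Finset.sum_const_zero, add_zero]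
      have h1 : (∑ j0 : Fin N.d,
            (extGNN N e t cC cA bias).state G t v (Fin.castAdd (Fintype.card ω) j0)
            * ((if j0 = e j' then (1:ℤ) else 0 : ℤ) : ℝ)) = N.state G t v (e j') := by
        rw [Finset.sum_congr rfl (fun j0 _ => by rw [pres t le_rfl v j0])]
        rw [Finset.sum_eq_single (e j')]
        · simp
        · intro b _ hb
          simp [hb]
        · intro hb
          exact absurd (Finset.mem_univ _) hb
      rw [h1]
      rw [he V G v j']
      rw [clip_of_mem]
      · unfold KForm.ind; split <;> norm_num
      · unfold KForm.ind; split <;> norm_num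
  | inr o =>
      show GNN.state (extGNN N e t cC cA bias) G (t+1) v (Fin.natAdd N.d (Fintype.equivFin ω o)) = _
      simp only [GNN.state, Sum.elim_inr]
      rw [extGNN_sum N e t cC cA bias, extGNN_sum N e t cC cA bias]
      simp only [extGNN_C_eq_lr N e t cC cA bias, extGNN_C_eq_r N e t cC cA bias,
        extGNN_A_eq_lr N e t cC cA bias, extGNN_A_eq_r N e t cC cA bias,
        extGNN_b_eq_r N e t cC cA bias,
        Int.cast_zero, mul_zero, Finset.sum_const_zero, add_zero,
        Equiv.symm_apply_apply]
      rw [hsem V G v o]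
      congr 2
      congr 1
      · rw [Finset.sum_congr rfl (fun j0 _ => by rw [pres t le_rfl v j0])]
        rw [fiber_sum e (fun j0 => N.state G t v j0) (cC o)]
        apply Finset.sum_congr rfl
        intro j' _
        rw [he V G v j']
      · have hsw : ∀ j0 : Fin N.d,
            (∑ w ∈ Finset.univ.filter (fun w => G.edge v w = true),
              (extGNN N e t cC cA bias).state G t w (Fin.castAdd (Fintype.card ω) j0)) =
            ∑ w ∈ Finset.univ.filter (fun w => G.edge v w = true), N.state G t w j0 :=
          fun j0 => Finset.sum_congr rfl (fun w _ => pres t le_rfl w j0)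
        rw [Finset.sum_congr rfl (fun j0 _ => by rw [hsw j0])]
        rw [fiber_sum e
          (fun j0 => ∑ w ∈ Finset.univ.filter (fun w => G.edge v w = true), N.state G t w j0)
          (cA o)]
        apply Finset.sum_congr rfl
        intro j' _
        congr 1
        apply Finset.sum_congr rfl
        intro w _
        rw [he V G w j']

end Ext
/-! ### Simple base formulas and flattening -/

/-- Simple base formulas: an atom, or a threshold `Σ cᵢ·#χᵢ + c ≥ 0`. -/
def SB : Type := ℕ ⊕ (List (ℤ × KForm) × ℤ)

/-- The expression `Σ cᵢ·#χᵢ + c`. -/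
def foldExpr (l : List (ℤ × KForm)) (c : ℤ) : KExpr :=
  l.foldr (fun p E => .add (.scale p.1 (.count p.2)) E) (.const c)

def SB.toForm : SB → KForm
  | .inl p => .atom p
  | .inr (l, c) => .ge0 (foldExpr l c)

def SB.pOf : SB → ℕ
  | .inl p => p
  | .inr _ => 0

def SB.lOf : SB → List (ℤ × KForm)
  | .inl _ => []
  | .inr (l, _) => l

lemma list_sum_eq_fin_sum {α : Type} (l : List α) (F : α → ℤ) :
    (l.map F).sum = ∑ i : Fin l.length, F (l.get i) := by
  induction l with
  | nil => simp
  | cons a l ih =>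
      have h : ∑ i : Fin (a :: l).length, F ((a :: l).get i)
          = F a + ∑ i : Fin l.length, F (l.get i) := Fin.sum_univ_succ _
      rw [List.map_cons, List.sum_cons, ih, h]

lemma foldExpr_val {V : Type} [Fintype V] (G : LGraph V) (u : V) :
    ∀ (l : List (ℤ × KForm)) (c : ℤ),
      (foldExpr l c).val G u
        = (l.map (fun p => p.1 * KExpr.val G u (.count p.2))).sum + c := by
  intro l
  induction l with
  | nil => intro c; simp [foldExpr, KExpr.val]
  | cons p l ih =>
      intro c
      show KExpr.val G u (.add (.scale p.1 (.count p.2)) (foldExpr l c)) = _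
      rw [show KExpr.val G u (.add (.scale p.1 (.count p.2)) (foldExpr l c))
          = p.1 * KExpr.val G u (.count p.2) + (foldExpr l c).val G u from rfl]
      rw [ih c, List.map_cons, List.sum_cons]
      ring

lemma foldExpr_md_mem : ∀ (l : List (ℤ × KForm)) (c : ℤ) (p : ℤ × KForm), p ∈ l →
    p.2.md + 1 ≤ (foldExpr l c).md := by
  intro l
  induction l with
  | nil => intro c p hp; simp at hp
  | cons q l ih =>
      intro c p hp
      have : (foldExpr (q :: l) c).md = max (q.2.md + 1) (foldExpr l c).md := rfl
      rw [this]
      rcases List.mem_cons.mp hp with h | h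
      · subst h; exact le_max_left _ _
      · exact le_trans (ih c p h) (le_max_right _ _)

lemma foldExpr_md_le : ∀ (l : List (ℤ × KForm)) (c : ℤ) (m : ℕ),
    (∀ p ∈ l, p.2.md + 1 ≤ m) → (foldExpr l c).md ≤ m := by
  intro l
  induction l with
  | nil => intro c m _; exact Nat.zero_le m
  | cons q l ih =>
      intro c m h
      have : (foldExpr (q :: l) c).md = max (q.2.md + 1) (foldExpr l c).md := rfl
      rw [this]
      exact max_le (h q List.mem_cons_self) (ih c m (fun p hp => h p (List.mem_cons_of_mem _ hp)))

/-- Flattening property for formulas. -/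
def FlatF (ψ : KForm) : Prop :=
  ∃ (κ : Type) (_ : Fintype κ) (bases : κ → SB) (f : (κ → Bool) → Bool),
    (∀ j, (bases j).toForm.md ≤ ψ.md) ∧
    ∀ (V : Type) [Fintype V] (G : LGraph V) (u : V),
      ψ.sat G u = f (fun j => (bases j).toForm.sat G u)

/-- Flattening property for expressions. -/
def FlatE (E : KExpr) : Prop :=
  ∃ (κ : Type) (_ : Fintype κ) (bases : κ → SB) (cnt : List (ℤ × KForm))
    (h : (κ → Bool) → ℤ),
    (∀ j, (bases j).toForm.md ≤ E.md) ∧ (∀ p ∈ cnt, p.2.md + 1 ≤ E.md) ∧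
    ∀ (V : Type) [Fintype V] (G : LGraph V) (u : V),
      E.val G u = (cnt.map (fun p => p.1 * KExpr.val G u (.count p.2))).sum
        + h (fun j => (bases j).toForm.sat G u)

mutual

theorem flatF : ∀ ψ : KForm, FlatF ψ
  | .atom p =>
      ⟨Unit, inferInstance, fun _ => .inl p, fun v => v (), fun _ => le_refl _,
        fun V _ G u => rfl⟩
  | .not φ => by
      obtain ⟨κ, inst, bases, f, hmd, hsem⟩ := flatF φ
      exact ⟨κ, inst, bases, fun v => !(f v), hmd, fun V _ G u => by
        show (!(φ.sat G u)) = _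
        rw [hsem V G u]⟩
  | .or φ ψ => by
      obtain ⟨κ1, inst1, b1, f1, hmd1, hsem1⟩ := flatF φ
      obtain ⟨κ2, inst2, b2, f2, hmd2, hsem2⟩ := flatF ψ
      refine ⟨κ1 ⊕ κ2, inferInstance, Sum.elim b1 b2,
        fun v => f1 (v ∘ Sum.inl) || f2 (v ∘ Sum.inr), ?_, ?_⟩
      · intro j
        cases j with
        | inl j => exact le_trans (hmd1 j) (le_max_left _ _)
        | inr j => exact le_trans (hmd2 j) (le_max_right _ _)
      · intro V _ G u
        show (φ.sat G u || ψ.sat G u) = _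
        rw [hsem1 V G u, hsem2 V G u]
        rfl
  | .ge0 E => by
      obtain ⟨κ, inst, bases, cnt, h, hmdb, hmdc, hsem⟩ := flatE E
      refine ⟨κ ⊕ (κ → Bool), inferInstance,
        Sum.elim bases (fun a => .inr (cnt, h a)),
        fun v => v (Sum.inr (fun j => v (Sum.inl j))), ?_, ?_⟩
      · intro j
        cases j with
        | inl j => exact hmdb j
        | inr a =>
            show ((KForm.ge0 (foldExpr cnt (h a))).md) ≤ (KForm.ge0 E).md
            show (foldExpr cnt (h a)).md ≤ E.md
            exact foldExpr_md_le cnt (h a) E.md hmdc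
      · intro V _ G u
        show decide (0 ≤ E.val G u) = _
        simp only [Sum.elim_inl, Sum.elim_inr]
        show _ = decide (0 ≤ (foldExpr cnt
          (h (fun j => (bases j).toForm.sat G u))).val G u)
        rw [foldExpr_val, hsem V G u]

theorem flatE : ∀ E : KExpr, FlatE E
  | .const c =>
      ⟨Empty, inferInstance, Empty.elim, [], fun _ => c, fun j => j.elim,
        fun p hp => absurd hp (by simp), fun V _ G u => by
          show c = List.sum [] + c
          simp⟩
  | .ind φ => by
      obtain ⟨κ, inst, bases, f, hmd, hsem⟩ := flatF φ
      refine ⟨κ, inst, bases, [], fun v => if f v then 1 else 0, hmd,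
        fun p hp => absurd hp (by simp), ?_⟩
      intro V _ G u
      show (if φ.sat G u then (1:ℤ) else 0) = List.sum [] + _
      rw [hsem V G u]
      simp
  | .count φ => by
      refine ⟨Empty, inferInstance, Empty.elim, [(1, φ)], fun _ => 0,
        fun j => j.elim, ?_, ?_⟩
      · intro p hp
        rw [List.mem_singleton] at hp
        subst hp
        exact le_refl _
      · intro V _ G u
        show KExpr.val G u (.count φ) = _
        simp [KExpr.val]
  | .add E₁ E₂ => by
      obtain ⟨κ1, inst1, b1, cnt1, h1, hmdb1, hmdc1, hsem1⟩ := flatE E₁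
      obtain ⟨κ2, inst2, b2, cnt2, h2, hmdb2, hmdc2, hsem2⟩ := flatE E₂
      refine ⟨κ1 ⊕ κ2, inferInstance, Sum.elim b1 b2, cnt1 ++ cnt2,
        fun v => h1 (v ∘ Sum.inl) + h2 (v ∘ Sum.inr), ?_, ?_, ?_⟩
      · intro j
        cases j with
        | inl j => exact le_trans (hmdb1 j) (le_max_left _ _)
        | inr j => exact le_trans (hmdb2 j) (le_max_right _ _)
      · intro p hp
        rcases List.mem_append.mp hp with h | h
        · exact le_trans (hmdc1 p h) (le_max_left _ _)
        · exact le_trans (hmdc2 p h) (le_max_right _ _)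
      · intro V _ G u
        show E₁.val G u + E₂.val G u = _
        rw [hsem1 V G u, hsem2 V G u, List.map_append, List.sum_append]
        exact add_add_add_comm _ _ _ _
  | .scale c E => by
      obtain ⟨κ, inst, bases, cnt, h, hmdb, hmdc, hsem⟩ := flatE E
      refine ⟨κ, inst, bases, cnt.map (fun p => (c * p.1, p.2)),
        fun v => c * h v, hmdb, ?_, ?_⟩
      · intro p hp
        rcases List.mem_map.mp hp with ⟨q, hq, rfl⟩
        exact hmdc q hq
      · intro V _ G u
        show c * E.val G u = _
        rw [hsem V G u, mul_add, List.map_map]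
        congr 1
        have : ∀ l : List (ℤ × KForm),
            c * (l.map (fun p => p.1 * KExpr.val G u (.count p.2))).sum
              = (l.map ((fun p => p.1 * KExpr.val G u (.count p.2))
                  ∘ (fun p => (c * p.1, p.2)))).sum := by
          intro l
          induction l with
          | nil => simp
          | cons q l ih =>
              simp only [List.map_cons, List.sum_cons, mul_add, ih]
              congr 1
              show c * (q.1 * _) = (c * q.1) * _
              ring
        exact this cnt

end
/-! ### Boolean helper formulas -/

def trueForm : KForm := .ge0 (.const 0)

lemma trueForm_sat {V : Type} [Fintype V] (G : LGraph V) (u : V) :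
    trueForm.sat G u = true := by
  show decide ((0:ℤ) ≤ (0:ℤ)) = true
  simp

def andF (φ ψ : KForm) : KForm := .not (.or (.not φ) (.not ψ))

lemma andF_sat {V : Type} [Fintype V] (G : LGraph V) (u : V) (φ ψ : KForm) :
    (andF φ ψ).sat G u = (φ.sat G u && ψ.sat G u) := by
  show (!((!φ.sat G u) || (!ψ.sat G u))) = _
  cases φ.sat G u <;> cases ψ.sat G u <;> rfl

def bigAnd (l : List KForm) : KForm := l.foldr andF trueForm

lemma bigAnd_sat {V : Type} [Fintype V] (G : LGraph V) (u : V) :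
    ∀ l : List KForm, (bigAnd l).sat G u = l.all (fun χ => χ.sat G u) := by
  intro l
  induction l with
  | nil => exact trueForm_sat G u
  | cons χ l ih =>
      show (andF χ (bigAnd l)).sat G u = _
      rw [andF_sat, ih]
      rfl

/-- Summation over a sigma fintype. -/
lemma sigma_sum {α : Type} [Fintype α] {τ : α → Type} [∀ a, Fintype (τ a)]
    (F : (Σ a, τ a) → ℝ) : (∑ x : Σ a, τ a, F x) = ∑ a, ∑ j : τ a, F ⟨a, j⟩ := by
  classical
  rw [← Finset.univ_sigma_univ, Finset.sum_sigma]

/-- Aggregated indicator equals the count. -/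
lemma agg_eq_count {V : Type} [Fintype V] (G : LGraph V) (u : V) (χ : KForm) :
    (∑ v ∈ Finset.univ.filter (fun v => G.edge u v = true), χ.ind G v)
      = ((KExpr.count χ).val G u : ℝ) := by
  classical
  unfold KForm.ind
  rw [Finset.sum_boole]
  show (((Finset.univ.filter (fun v => G.edge u v = true)).filter
      (fun v => χ.sat G v = true)).card : ℝ) = _
  rw [Finset.filter_filter]
  norm_num [KExpr.val]
/-! ### SB helpers and arithmetic bridges -/

def SB.isAtomB : SB → Bool
  | .inl _ => true
  | .inr _ => false

def SB.cOf : SB → ℤ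
  | .inl _ => 0
  | .inr (_, c) => c

lemma SB.atom_spec (s : SB) (h : s.isAtomB = true) :
    s.toForm = .atom s.pOf ∧ s.lOf = [] ∧ s.cOf = 0 := by
  cases s with
  | inl p => exact ⟨rfl, rfl, rfl⟩
  | inr x => simp [SB.isAtomB] at h

lemma SB.lOf_md (s : SB) (p : ℤ × KForm) (hp : p ∈ s.lOf) :
    p.2.md + 1 ≤ s.toForm.md := by
  cases s with
  | inl q => simp [SB.lOf] at hp
  | inr x =>
      obtain ⟨l, c⟩ := x
      exact foldExpr_md_mem l c p hp

/-- Threshold bridge. -/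
lemma sb_bridge {V : Type} [Fintype V] (G : LGraph V) (u : V) (s : SB)
    (h : s.isAtomB = false) :
    clip ((∑ pos : Fin s.lOf.length,
        ((KExpr.count (s.lOf.get pos).2).val G u : ℝ) * ((s.lOf.get pos).1 : ℝ))
      + ((s.cOf + 1 : ℤ) : ℝ)) = s.toForm.ind G u := by
  cases s with
  | inl p => simp [SB.isAtomB] at h
  | inr x =>
      obtain ⟨l, c⟩ := x
      show clip ((∑ pos : Fin l.length,
          ((KExpr.count (l.get pos).2).val G u : ℝ) * ((l.get pos).1 : ℝ))
        + ((c + 1 : ℤ) : ℝ)) = (KForm.ge0 (foldExpr l c)).ind G u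
      have e1 : (∑ pos : Fin l.length,
          ((KExpr.count (l.get pos).2).val G u : ℝ) * ((l.get pos).1 : ℝ))
          = (((l.map (fun p => p.1 * KExpr.val G u (.count p.2))).sum : ℤ) : ℝ) := by
        rw [list_sum_eq_fin_sum l (fun p => p.1 * KExpr.val G u (.count p.2))]
        push_cast
        apply Finset.sum_congr rfl
        intro pos _
        ring
      rw [e1]
      have e2 : ((((l.map (fun p => p.1 * KExpr.val G u (.count p.2))).sum : ℤ) : ℝ))
          + ((c + 1 : ℤ) : ℝ) = (((foldExpr l c).val G u : ℤ) : ℝ) + 1 := by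
        rw [foldExpr_val]
        push_cast
        ring
      rw [e2, clip_int_succ]
      unfold KForm.ind
      show _ = (if (decide (0 ≤ (foldExpr l c).val G u) : Bool) = true then (1:ℝ) else 0)
      by_cases h0 : 0 ≤ (foldExpr l c).val G u <;> simp [h0]

/-- AND bridge. -/
lemma and_bridge {α : Type} [Fintype α] (a x : α → Bool) :
    clip ((∑ q, (if x q = true then (1:ℝ) else 0) * (if a q = true then (1:ℝ) else -1))
      + ((1 - ((Finset.univ.filter (fun q => a q = true)).card : ℤ)) : ℝ))
      = if (∀ q, x q = a q) then 1 else 0 := by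
  classical
  have hsumS : (∑ q, (if a q = true then (1:ℝ) else 0))
      = ((Finset.univ.filter (fun q => a q = true)).card : ℝ) := Finset.sum_boole _ _
  by_cases hall : ∀ q, x q = a q
  · rw [if_pos hall]
    have : ∀ q, (if x q = true then (1:ℝ) else 0) * (if a q = true then (1:ℝ) else -1)
        = if a q = true then 1 else 0 := by
      intro q
      rw [hall q]
      by_cases hq : a q = true <;> simp [hq]
    rw [Finset.sum_congr rfl (fun q _ => this q), hsumS]
    apply clip_of_one_le
    push_cast
    ring_nf
    try norm_num
  · rw [if_neg hall]
    push_neg at hall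
    obtain ⟨q0, hq0⟩ := hall
    apply clip_of_nonpos
    have ht : ∀ q, (if x q = true then (1:ℝ) else 0) * (if a q = true then (1:ℝ) else -1)
        ≤ if a q = true then 1 else 0 := by
      intro q
      by_cases h1 : x q = true <;> by_cases h2 : a q = true <;> simp [h1, h2] <;> norm_num
    have ht0 : (if x q0 = true then (1:ℝ) else 0) * (if a q0 = true then (1:ℝ) else -1)
        ≤ (if a q0 = true then 1 else 0) - 1 := by
      by_cases h2 : a q0 = true
      · have h1 : x q0 = false := by
          cases hx : x q0
          · rfl
          · exact absurd (hx.trans h2.symm) hq0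
        simp [h1, h2]
      · have h2' : a q0 = false := by
          cases ha : a q0
          · rfl
          · exact absurd ha h2
        have h1 : x q0 = true := by
          cases hx : x q0
          · exact absurd (hx.trans h2'.symm) hq0
          · rfl
        simp [h1, h2']
    have hsum : (∑ q, (if x q = true then (1:ℝ) else 0) * (if a q = true then (1:ℝ) else -1))
        ≤ (∑ q, (if a q = true then (1:ℝ) else 0)) - 1 := by
      rw [← Finset.add_sum_erase Finset.univ _ (Finset.mem_univ q0),
          ← Finset.add_sum_erase Finset.univ (fun q => if a q = true then (1:ℝ) else 0)
            (Finset.mem_univ q0)]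
      have := Finset.sum_le_sum (fun q (_ : q ∈ Finset.univ.erase q0) => ht q)
      linarith
    rw [hsumS] at hsum
    push_cast
    linarith
/-! ### The level step -/

lemma KForm.ind_nonneg {V : Type} [Fintype V] (G : LGraph V) (u : V) (φ : KForm) :
    0 ≤ φ.ind G u := by unfold KForm.ind; split <;> norm_num

lemma KForm.ind_le_one {V : Type} [Fintype V] (G : LGraph V) (u : V) (φ : KForm) :
    φ.ind G u ≤ 1 := by unfold KForm.ind; split <;> norm_num

section LevelStep

variable {ι : Type} [Fintype ι] (κ : ι → Type) [∀ i, Fintype (κ i)]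
  (bases : ∀ i, κ i → SB)

abbrev KTot := Σ i, κ i

abbrev ChIdx := Σ q : KTot κ, Fin ((bases q.1 q.2).lOf.length)

abbrev BigIdx := KTot κ ⊕ ChIdx κ bases

def bigfam : BigIdx κ bases → KForm :=
  Sum.elim (fun q => .atom (bases q.1 q.2).pOf)
    (fun x => ((bases x.1.1 x.1.2).lOf.get x.2).2)

/-- The conjunction formula for an assignment. -/
noncomputable def conjF (a : KTot κ → Bool) : KForm :=
  bigAnd ((Finset.univ.toList (α := KTot κ)).map
    (fun q => if a q then (bases q.1 q.2).toForm else .not ((bases q.1 q.2).toForm)))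

lemma conjF_sat_iff {V : Type} [Fintype V] (G : LGraph V) (u : V) (a : KTot κ → Bool) :
    ((conjF κ bases a).sat G u = true)
      ↔ ∀ q : KTot κ, (bases q.1 q.2).toForm.sat G u = a q := by
  unfold conjF
  rw [bigAnd_sat, List.all_eq_true]
  constructor
  · intro h q
    have hq := h _ (List.mem_map_of_mem (Finset.mem_toList.mpr (Finset.mem_univ q)))
    by_cases ha : a q = true
    · rw [if_pos ha] at hq
      rw [hq, ha]
    · have ha' : a q = false := by
        cases hh : a q
        · rfl
        · exact absurd hh ha
      rw [if_neg ha] at hq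
      have : (!(bases q.1 q.2).toForm.sat G u) = true := hq
      cases hs : (bases q.1 q.2).toForm.sat G u
      · rw [ha']
      · rw [hs] at this; exact absurd this (by simp)
  · intro h χ hχ
    obtain ⟨q, _, rfl⟩ := List.mem_map.mp hχ
    by_cases ha : a q = true
    · rw [if_pos ha, h q, ha]
    · have ha' : a q = false := by
        cases hh : a q
        · rfl
        · exact absurd hh ha
      rw [if_neg ha]
      show (!(bases q.1 q.2).toForm.sat G u) = true
      rw [h q, ha']
      rfl

lemma conjF_ind {V : Type} [Fintype V] (G : LGraph V) (u : V) (a : KTot κ → Bool) :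
    (conjF κ bases a).ind G u
      = if (∀ q : KTot κ, (bases q.1 q.2).toForm.sat G u = a q) then 1 else 0 := by
  unfold KForm.ind
  by_cases hP : ∀ q : KTot κ, (bases q.1 q.2).toForm.sat G u = a q
  · rw [if_pos hP, if_pos ((conjF_sat_iff κ bases G u a).mpr hP)]
  · rw [if_neg hP, if_neg]
    intro hc
    exact hP ((conjF_sat_iff κ bases G u a).mp hc)

lemma level_step (m : ℕ) (fam : ι → KForm) (f : ∀ i, (κ i → Bool) → Bool)
    (hsem : ∀ (i : ι) (V : Type) [Fintype V] (G : LGraph V) (u : V),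
      (fam i).sat G u = f i (fun j => ((bases i j).toForm).sat G u))
    (hMR : MR (3*m) (bigfam κ bases)) : MR (3*m+3) fam := by
  classical
  -- Step 1: thresholds / atom copies
  have h1 : MR (3*m+1) (Sum.elim (bigfam κ bases)
      (fun q : KTot κ => (bases q.1 q.2).toForm)) := by
    apply hMR.ext (fun q : KTot κ => (bases q.1 q.2).toForm)
      (fun q' j => if (bases q'.1 q'.2).isAtomB then (if j = Sum.inl q' then 1 else 0) else 0)
      (fun q' j => Sum.elim (fun _ => (0:ℤ))
        (fun x : ChIdx κ bases =>
          if x.1 = q' then ((bases x.1.1 x.1.2).lOf.get x.2).1 else 0) j)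
      (fun q' => (bases q'.1 q'.2).cOf + (if (bases q'.1 q'.2).isAtomB then 0 else 1))
    intro V _ G u q'
    by_cases hA : (bases q'.1 q'.2).isAtomB = true
    · obtain ⟨hform, hl, hc⟩ := SB.atom_spec _ hA
      have hS1 : (∑ j : BigIdx κ bases, (bigfam κ bases j).ind G u
          * ((if (bases q'.1 q'.2).isAtomB then (if j = Sum.inl q' then (1:ℤ) else 0) else 0 : ℤ) : ℝ))
          = (bigfam κ bases (Sum.inl q')).ind G u := by
        rw [Finset.sum_eq_single (Sum.inl q')]
        · simp [hA]
        · intro b _ hb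
          simp [hA, hb]
        · intro hb
          exact absurd (Finset.mem_univ _) hb
      have hS2 : (∑ j : BigIdx κ bases,
          (∑ v ∈ Finset.univ.filter (fun v => G.edge u v = true), (bigfam κ bases j).ind G v)
          * ((Sum.elim (fun _ => (0:ℤ))
            (fun x : ChIdx κ bases =>
              if x.1 = q' then ((bases x.1.1 x.1.2).lOf.get x.2).1 else 0) j : ℤ) : ℝ)) = 0 := by
        apply Finset.sum_eq_zero
        rintro (q | ⟨xq, xpos⟩) _
        · simp
        · by_cases hx : xq = q'
          · subst hx
            have hlen : (bases xq.1 xq.2).lOf.length = 0 := by rw [hl]; rfl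
            exact (Fin.cast hlen xpos).elim0
          · simp [hx]
      rw [hS1, hS2]
      have hbias : ((((bases q'.1 q'.2).cOf
          + if (bases q'.1 q'.2).isAtomB then (0:ℤ) else 1) : ℤ) : ℝ) = 0 := by
        simp [hA, hc]
      rw [hbias, add_zero, add_zero]
      rw [hform]
      simp only [bigfam, Sum.elim_inl]
      rw [clip_of_mem (KForm.ind_nonneg _ _ _) (KForm.ind_le_one _ _ _)]
    · have hA' : (bases q'.1 q'.2).isAtomB = false := by
        cases hh : (bases q'.1 q'.2).isAtomB
        · rfl
        · exact absurd hh hA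
      have hS1 : (∑ j : BigIdx κ bases, (bigfam κ bases j).ind G u
          * ((if (bases q'.1 q'.2).isAtomB then (if j = Sum.inl q' then (1:ℤ) else 0) else 0 : ℤ) : ℝ))
          = 0 := by
        apply Finset.sum_eq_zero
        intro j _
        simp [hA']
      have hS2 : (∑ j : BigIdx κ bases,
          (∑ v ∈ Finset.univ.filter (fun v => G.edge u v = true), (bigfam κ bases j).ind G v)
          * ((Sum.elim (fun _ => (0:ℤ))
            (fun x : ChIdx κ bases =>
              if x.1 = q' then ((bases x.1.1 x.1.2).lOf.get x.2).1 else 0) j : ℤ) : ℝ))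
          = ∑ pos : Fin (bases q'.1 q'.2).lOf.length,
              ((KExpr.count ((bases q'.1 q'.2).lOf.get pos).2).val G u : ℝ)
              * (((bases q'.1 q'.2).lOf.get pos).1 : ℝ) := by
        rw [Fintype.sum_sum_type]
        have hleft : (∑ q : KTot κ,
            (∑ v ∈ Finset.univ.filter (fun v => G.edge u v = true),
              (bigfam κ bases (Sum.inl q)).ind G v)
            * ((Sum.elim (fun _ => (0:ℤ)) (fun x : ChIdx κ bases =>
                if x.1 = q' then ((bases x.1.1 x.1.2).lOf.get x.2).1 else 0) (Sum.inl q) : ℤ) : ℝ))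
            = 0 := by
          apply Finset.sum_eq_zero
          intro q _
          simp
        rw [hleft, zero_add]
        rw [sigma_sum]
        rw [Finset.sum_eq_single q']
        · apply Finset.sum_congr rfl
          intro pos _
          simp only [Sum.elim_inr]
          rw [agg_eq_count]
          norm_num [bigfam]
        · intro q _ hq
          apply Finset.sum_eq_zero
          intro pos _
          simp [hq]
        · intro hq
          exact absurd (Finset.mem_univ _) hq
      rw [hS1, hS2, hA', zero_add]
      have hb : (((bases q'.1 q'.2).cOf + (if false then (0:ℤ) else 1) : ℤ) : ℝ)
          = (((bases q'.1 q'.2).cOf + 1 : ℤ) : ℝ) := by norm_num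
      rw [hb, sb_bridge G u _ hA']
  -- Step 2: conjunctions
  have h2 : MR (3*m+2) (Sum.elim (Sum.elim (bigfam κ bases)
      (fun q : KTot κ => (bases q.1 q.2).toForm)) (conjF κ bases)) := by
    apply h1.ext (conjF κ bases)
      (fun a j => Sum.elim (fun _ => (0:ℤ)) (fun q => if a q then 1 else -1) j)
      (fun _ _ => 0)
      (fun a => 1 - ((Finset.univ.filter (fun q : KTot κ => a q = true)).card : ℤ))
    intro V _ G u a
    have hS2 : (∑ j : BigIdx κ bases ⊕ KTot κ,
        (∑ v ∈ Finset.univ.filter (fun v => G.edge u v = true),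
          ((Sum.elim (bigfam κ bases)
            (fun q : KTot κ => (bases q.1 q.2).toForm)) j).ind G v) * ((0:ℤ):ℝ)) = 0 := by
      apply Finset.sum_eq_zero
      intro j _
      simp
    rw [hS2, add_zero]
    rw [Fintype.sum_sum_type]
    have hleft : (∑ j : BigIdx κ bases,
        ((Sum.elim (bigfam κ bases) (fun q : KTot κ => (bases q.1 q.2).toForm)) (Sum.inl j)).ind G u
        * ((Sum.elim (fun _ => (0:ℤ)) (fun q => if a q then 1 else -1) (Sum.inl j) : ℤ) : ℝ)) = 0 := by
      apply Finset.sum_eq_zero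
      intro j _
      simp
    rw [hleft, zero_add]
    have hmain : (∑ q : KTot κ,
        ((Sum.elim (bigfam κ bases) (fun q : KTot κ => (bases q.1 q.2).toForm)) (Sum.inr q)).ind G u
        * ((Sum.elim (fun _ : BigIdx κ bases => (0:ℤ)) (fun q => if a q then 1 else -1) (Sum.inr q) : ℤ) : ℝ))
        = ∑ q : KTot κ, (if (bases q.1 q.2).toForm.sat G u = true then (1:ℝ) else 0)
            * (if a q = true then (1:ℝ) else -1) := by
      apply Finset.sum_congr rfl
      intro q _
      simp only [Sum.elim_inr]
      congr 1
      by_cases hq : a q = true <;> simp [hq]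
    rw [hmain, conjF_ind]
    rw [show ((1 - (((Finset.univ.filter (fun q : KTot κ => a q = true)).card : ℤ)) : ℤ) : ℝ)
        = 1 - (((Finset.univ.filter (fun q : KTot κ => a q = true)).card : ℤ) : ℝ) from by
      push_cast; ring]
    exact (and_bridge a (fun q => (bases q.1 q.2).toForm.sat G u)).symm
  -- Step 3: disjunctions
  have h3 : MR (3*m+3) (Sum.elim (Sum.elim (Sum.elim (bigfam κ bases)
      (fun q : KTot κ => (bases q.1 q.2).toForm)) (conjF κ bases)) fam) := by
    apply h2.ext fam
      (fun i j => Sum.elim (fun _ => (0:ℤ))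
        (fun a : KTot κ → Bool => if f i (fun jj => a ⟨i, jj⟩) then 1 else 0) j)
      (fun _ _ => 0)
      (fun _ => 0)
    intro V _ G u i
    have hS2 : (∑ j : (BigIdx κ bases ⊕ KTot κ) ⊕ (KTot κ → Bool),
        (∑ v ∈ Finset.univ.filter (fun v => G.edge u v = true),
          ((Sum.elim (Sum.elim (bigfam κ bases)
            (fun q : KTot κ => (bases q.1 q.2).toForm)) (conjF κ bases)) j).ind G v)
          * ((0:ℤ):ℝ)) = 0 := by
      apply Finset.sum_eq_zero
      intro j _
      simp
    rw [hS2, add_zero]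
    rw [Fintype.sum_sum_type]
    have hleft : (∑ j : BigIdx κ bases ⊕ KTot κ,
        ((Sum.elim (Sum.elim (bigfam κ bases)
          (fun q : KTot κ => (bases q.1 q.2).toForm)) (conjF κ bases)) (Sum.inl j)).ind G u
        * ((Sum.elim (fun _ => (0:ℤ))
          (fun a : KTot κ → Bool => if f i (fun jj => a ⟨i, jj⟩) then 1 else 0) (Sum.inl j) : ℤ) : ℝ))
        = 0 := by
      apply Finset.sum_eq_zero
      intro j _
      simp
    rw [hleft, zero_add]
    set a0 : KTot κ → Bool := fun q => (bases q.1 q.2).toForm.sat G u with ha0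
    have hmain : (∑ a : KTot κ → Bool,
        ((Sum.elim (Sum.elim (bigfam κ bases)
          (fun q : KTot κ => (bases q.1 q.2).toForm)) (conjF κ bases)) (Sum.inr a)).ind G u
        * ((Sum.elim (fun _ : BigIdx κ bases ⊕ KTot κ => (0:ℤ))
          (fun a : KTot κ → Bool => if f i (fun jj => a ⟨i, jj⟩) then 1 else 0) (Sum.inr a) : ℤ) : ℝ))
        = ((if f i (fun jj => a0 ⟨i, jj⟩) then (1:ℤ) else 0 : ℤ) : ℝ) := by
      rw [Finset.sum_eq_single a0]
      · simp only [Sum.elim_inr, conjF_ind]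
        simp [a0]
      · intro a _ ha
        simp only [Sum.elim_inr, conjF_ind]
        rw [if_neg, zero_mul]
        intro hc
        apply ha
        funext q
        exact (hc q).symm
      · intro ha
        exact absurd (Finset.mem_univ _) ha
    rw [hmain]
    unfold KForm.ind
    rw [hsem i V G u]
    have : (fun jj => a0 ⟨i, jj⟩) = fun j => ((bases i j).toForm).sat G u := rfl
    rw [this]
    show _ = clip (_ + ((0:ℤ):ℝ))
    by_cases hf : f i (fun j => ((bases i j).toForm).sat G u) = true
    · rw [if_pos hf, if_pos hf]
      norm_num [clip_of_one_le]
    · rw [if_neg hf, if_neg hf]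
      norm_num [clip_of_nonpos]
  exact h3.precomp Sum.inr

end LevelStep
/-! ### The level induction and the main construction -/

theorem levelMR : ∀ (m : ℕ) (ι : Type) [Fintype ι] (fam : ι → KForm),
    (∀ i, (fam i).md ≤ m) → MR (3*m+3) fam := by
  intro m
  induction m with
  | zero =>
      intro ι _ fam hmd
      choose κ instK bases f hmdb hsem using fun i => flatF (fam i)
      haveI : ∀ i, Fintype (κ i) := instK
      have h0 : MR (3*0) (bigfam κ bases) := by
        classical
        set K := (Finset.univ.sup (fun q : KTot κ => (bases q.1 q.2).pOf)) + 1 with hK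
        have hlt : ∀ q : KTot κ, (bases q.1 q.2).pOf < K := by
          intro q
          have h := Finset.le_sup (f := fun q : KTot κ => (bases q.1 q.2).pOf)
            (Finset.mem_univ q)
          omega
        refine ⟨{ d := K, k := K, hk := le_rfl, L := 0, C := fun _ => 0, A := fun _ => 0,
                  b := fun _ => 0, cls := fun _ => false }, rfl,
          Sum.elim (fun q : KTot κ => (⟨(bases q.1 q.2).pOf, hlt q⟩ : Fin K))
            (fun _ => (⟨0, Nat.succ_pos _⟩ : Fin K)), ?_⟩
        intro V _ G v j
        cases j with
        | inl q =>
            show (if (bases q.1 q.2).pOf < K ∧ G.label v ((bases q.1 q.2).pOf) = true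
              then (1:ℝ) else 0) = (KForm.atom (bases q.1 q.2).pOf).ind G v
            unfold KForm.ind
            show _ = if (G.label v ((bases q.1 q.2).pOf)) = true then (1:ℝ) else 0
            by_cases hx : G.label v ((bases q.1 q.2).pOf) = true
            · rw [if_pos ⟨hlt q, hx⟩, if_pos hx]
            · rw [if_neg (fun hc => hx hc.2), if_neg hx]
        | inr x =>
            obtain ⟨q, pos⟩ := x
            exfalso
            have h1 := SB.lOf_md (bases q.1 q.2) _
              (List.get_mem ((bases q.1 q.2).lOf) pos)
            have h2 := hmdb q.1 q.2
            have h3 := hmd q.1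
            omega
      have := level_step κ bases 0 fam f hsem h0
      exact this
  | succ m ih =>
      intro ι _ fam hmd
      choose κ instK bases f hmdb hsem using fun i => flatF (fam i)
      haveI : ∀ i, Fintype (κ i) := instK
      have hbig : ∀ j : BigIdx κ bases, (bigfam κ bases j).md ≤ m := by
        rintro (q | ⟨q, pos⟩)
        · show (KForm.atom (bases q.1 q.2).pOf).md ≤ m
          show 0 ≤ m
          exact Nat.zero_le m
        · show (((bases q.1 q.2).lOf.get pos).2).md ≤ m
          have h1 : (((bases q.1 q.2).lOf.get pos).2).md + 1 ≤ (bases q.1 q.2).toForm.md :=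
            SB.lOf_md (bases q.1 q.2) _
              (List.get_mem ((bases q.1 q.2).lOf) pos)
          have h2 := hmdb q.1 q.2
          have h3 := hmd q.1
          omega
      have h0 : MR (3*m+3) (bigfam κ bases) := ih (BigIdx κ bases) (bigfam κ bases) hbig
      have h0' : MR (3*(m+1)) (bigfam κ bases) := by
        rw [Nat.mul_succ]
        exact h0
      exact level_step κ bases (m+1) fam f hsem h0'
/-- There is an absolute constant `c` such that every `K^#` formula `φ` is recognized
by a GNN (sum aggregation, integer-weight combinations `σ(xC+yA+b)`, classification
reading one component of the final state) with at most `c·(md(φ)+1)` layers. -/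
theorem logic_to_gnn_few_layers :
    ∃ c : ℕ, ∀ φ : KForm, ∃ N : GNN,
      N.L ≤ c * (KForm.md φ + 1) ∧
      (∃ i : Fin N.d, ∀ x : Fin N.d → ℝ, N.cls x = decide (x i = 1)) ∧
      (∀ (V : Type) [Fintype V] (G : LGraph V) (u : V),
        N.accepts G u ↔ KForm.sat G u φ = true) := by
  refine ⟨3, fun φ => ?_⟩
  obtain ⟨N, hL, e, he⟩ := levelMR φ.md Unit (fun _ => φ) (fun _ => le_rfl)
  refine ⟨{ N with cls := fun x => decide (x (e ()) = 1) }, ?_, ⟨e (), fun x => rfl⟩, ?_⟩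
  · show N.L ≤ 3 * (φ.md + 1)
    omega
  · intro V _ G u
    unfold GNN.accepts
    rw [GNN.state_cls_congr]
    show decide (N.state G N.L u (e ()) = 1) = true ↔ _
    rw [hL, he V G u ()]
    unfold KForm.ind
    by_cases hs : φ.sat G u = true
    · simp [hs]
    · simp [hs]
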